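/- Let K be the class of all finite fields. For all finite fields F_1 and F_2, the generator distance dis(F_1,F_2) in K is finite if and only if F_1 and F_2 have the same characteristic. -/

import Mathlib

/-- Bundled fields. -/
abbrev FieldCat := CategoryTheory.Bundled Field

instance (F : FieldCat) : Field F := F.str

namespace FieldNetwork

/-- `A` is largely embeddable into `B` in the class of all finite fields: `B` has a
(necessarily finite) subfield `S` isomorphic to `A` such that `S` together with one
extra element generates `B`. -/
def LargeEmb (A B : FieldCat.{0}) : Prop :=
  ∃ S : Subfield B, Finite S ∧ Nonempty (A ≃+* S) ∧
    ∃ b : B, Subfield.closure (↑S ∪ {b}) = ⊤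

/-- A path of length `n` between `A` and `B` in the network of large embeddings of the
class of all finite fields. -/
def HasPath (A B : FieldCat.{0}) (n : ℕ) : Prop :=
  ∃ C : ℕ → FieldCat.{0}, (∀ i ≤ n, Finite (C i)) ∧
    Nonempty ((C 0) ≃+* A) ∧ Nonempty ((C n) ≃+* B) ∧
    ∀ i < n, LargeEmb (C i) (C (i + 1)) ∨ LargeEmb (C (i + 1)) (C i)

/-- The generator distance in the class of all finite fields, in `ℕ ∪ {∞}`. -/
noncomputable def dis (A B : FieldCat.{0}) : ℕ∞ :=
  sInf {q : ℕ∞ | ∃ n : ℕ, q = (n : ℕ∞) ∧ HasPath A B n}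

/-- Isomorphic rings have the same `ringChar`. -/
lemma ringChar_eq_of_equiv {R S : Type*} [NonAssocSemiring R] [NonAssocSemiring S]
    (e : R ≃+* S) : ringChar R = ringChar S := by
  have : CharP S (ringChar R) := charP_of_injective_ringHom (f := (e : R →+* S)) e.injective _
  haveI := this; exact (ringChar.eq S (ringChar R)).symm

/-- A subfield has the same `ringChar` as the ambient field. -/
lemma ringChar_subfield {F : Type*} [Field F] (S : Subfield F) :
    ringChar S = ringChar F := by
  have : CharP F (ringChar S) := by
    haveI := ringChar.charP S
    exact charP_of_injective_ringHom (f := S.subtype) (fun a b h => Subtype.ext h) (ringChar S)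
  haveI := this; exact (ringChar.eq F (ringChar S)).symm

lemma LargeEmb.ringChar_eq {X Y : FieldCat.{0}} (h : LargeEmb X Y) :
    ringChar X = ringChar Y := by
  obtain ⟨S, _, ⟨e⟩, _⟩ := h
  rw [ringChar_eq_of_equiv e, ringChar_subfield]

/-- A finite field is generated by a single element (a generator of its unit group). -/
lemma exists_closure_singleton_eq_top (F : Type*) [Field F] [Finite F] :
    ∃ b : F, Subfield.closure {b} = ⊤ := by
  obtain ⟨g, hg⟩ := IsCyclic.exists_generator (α := Fˣ)
  refine ⟨(g : F), eq_top_iff.2 fun x _ => ?_⟩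
  by_cases hx : x = 0
  · rw [hx]; exact Subfield.zero_mem _
  · obtain ⟨k, hk⟩ := hg (Units.mk0 x hx)
    have hb : (g : F) ∈ Subfield.closure {(g : F)} :=
      Subfield.subset_closure (Set.mem_singleton _)
    have : x = (g : F) ^ k := by
      have := congrArg (Units.val) hk
      simpa using this.symm
    rw [this]
    exact Subfield.zpow_mem _ hb k

/-- The bundled field `ZMod p` for `p` prime. -/
def Zc (p : ℕ) (hp : Fact p.Prime) : FieldCat.{0} :=
  @CategoryTheory.Bundled.of Field (ZMod p) (@ZMod.instField p hp)

lemma largeEmb_zmod (F : FieldCat.{0}) (hF : Finite F) (p : ℕ) (hp : Fact p.Prime)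
    (hc : CharP F p) : LargeEmb (Zc p hp) F := by
  haveI := hp
  let f : ZMod p →+* F := ZMod.castHom dvd_rfl F
  have hfinj : Function.Injective f := f.injective
  refine ⟨f.fieldRange, ?_, ⟨?_⟩, ?_⟩
  · exact Subtype.finite
  · exact RingEquiv.ofBijective f.rangeRestrictField
      ⟨fun a b h => hfinj (congrArg Subtype.val h),
       fun ⟨y, hy⟩ => by
        obtain ⟨x, hx⟩ := RingHom.mem_fieldRange.1 hy
        exact ⟨x, Subtype.ext hx⟩⟩
  · obtain ⟨b, hb⟩ := exists_closure_singleton_eq_top F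
    refine ⟨b, eq_top_iff.2 ?_⟩
    rw [← hb]
    exact Subfield.closure_mono Set.subset_union_right

end FieldNetwork

/-- two finite fields are at finite generator distance in the class of
all finite fields iff they have the same characteristic. -/
theorem dis_finite_fields_finite_iff_same_char (A B : FieldCat.{0})
    (hA : Finite A) (hB : Finite B) :
    FieldNetwork.dis A B < ⊤ ↔ ringChar A = ringChar B := by
  constructor
  · intro h
    obtain ⟨q, hq, -⟩ := sInf_lt_iff.1 h
    obtain ⟨n, rfl, C, hfin, ⟨e0⟩, ⟨en⟩, hstep⟩ := hq
    have key : ∀ i ≤ n, ringChar (C i) = ringChar (C 0) := by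
      intro i hi
      induction i with
      | zero => rfl
      | succ j ih =>
        have hj : j ≤ n := Nat.le_of_succ_le hi
        rcases hstep j (Nat.lt_of_succ_le hi) with h' | h'
        · rw [← h'.ringChar_eq]; exact ih hj
        · rw [h'.ringChar_eq]; exact ih hj
    calc ringChar A = ringChar (C 0) := (FieldNetwork.ringChar_eq_of_equiv e0).symm
      _ = ringChar (C n) := (key n le_rfl).symm
      _ = ringChar B := FieldNetwork.ringChar_eq_of_equiv en
  · intro h
    set p := ringChar A with hpA
    haveI hcA : CharP A p := ringChar.charP A
    haveI hcB : CharP B p := h ▸ ringChar.charP B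
    haveI hp : Fact p.Prime := ⟨CharP.char_is_prime A p⟩
    have hpath : FieldNetwork.HasPath A B 2 := by
      refine ⟨fun i => match i with
        | 0 => A
        | 1 => FieldNetwork.Zc p hp
        | _ + 2 => B, ?_, ⟨RingEquiv.refl A⟩, ⟨RingEquiv.refl B⟩, ?_⟩
      · intro i _
        match i with
        | 0 => exact hA
        | 1 => exact inferInstanceAs (Finite (ZMod p))
        | _ + 2 => exact hB
      · intro i hi
        match i with
        | 0 => exact Or.inr (FieldNetwork.largeEmb_zmod A hA p hp hcA)
        | 1 => exact Or.inl (FieldNetwork.largeEmb_zmod B hB p hp hcB)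
    calc FieldNetwork.dis A B ≤ (2 : ℕ∞) := sInf_le ⟨2, rfl, hpath⟩
      _ < ⊤ := lt_top_iff_ne_top.2 (by decide)
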